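/- arXiv:1605.07968 — 2 statements merged into one kernel-verified Lean document; each statement's English description precedes it below -/
import Mathlib

section
/- (Resummation of the dressed phase.) Let 0 < q < 1, set γ = −log q, and let u be complex with |Im u| < γ. Then Γ_{q⁴}(1 + iu/(2γ)) · Γ_{q⁴}(1/2 − iu/(2γ)) / ( Γ_{q⁴}(1 − iu/(2γ)) · Γ_{q⁴}(1/2 + iu/(2γ)) ) = exp( Σ_{n=1}^∞ ( q^{2n} / ( n (1 + q^{2n}) ) ) ( e^{2 i n u} − e^{−2 i n u} ) ), where all four q⁴-gamma values are nonzero and the series converges absolutely. -/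
open Complex

/-- The infinite q-Pochhammer symbol `(a; q) = ∏_{n=0}^∞ (1 - a qⁿ)`. -/
noncomputable def qPoch (a : ℂ) (q : ℝ) : ℂ := ∏' n : ℕ, (1 - a * (q : ℂ) ^ n)

/-- `q^x = exp(x log q)` for the positive real `q`. -/
noncomputable def qpow (q : ℝ) (x : ℂ) : ℂ := Complex.exp (x * (Real.log q : ℂ))

/-- The q-gamma function `Γ_q(x) = (1-q)^{1-x} (q;q)/(q^x;q)`. -/
noncomputable def qGamma (q : ℝ) (x : ℂ) : ℂ :=
  Complex.exp ((1 - x) * (Real.log (1 - q) : ℂ)) * qPoch (q : ℂ) q / qPoch (qpow q x) q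

noncomputable def FF (Q : ℝ) (a : ℂ) : ℂ := ∑' n : ℕ, a ^ n / (n * (1 - (Q : ℂ) ^ n))

section Aux

variable {Q : ℝ} {a : ℂ}

lemma one_sub_ne_zero' {z : ℂ} (hz : ‖z‖ < 1) : (1 : ℂ) - z ≠ 0 := by
  intro h
  have hz1 : z = 1 := by linear_combination -h
  rw [hz1] at hz
  simp at hz

lemma norm_fac_le (hQ0 : 0 < Q) (hQ1 : Q < 1) (k : ℕ) : ‖a * (Q : ℂ) ^ k‖ ≤ ‖a‖ * Q ^ k := by
  rw [norm_mul, norm_pow, Complex.norm_real, Real.norm_eq_abs, abs_of_pos hQ0]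

lemma norm_fac_lt (hQ0 : 0 < Q) (hQ1 : Q < 1) (ha : ‖a‖ < 1) (k : ℕ) :
    ‖a * (Q : ℂ) ^ k‖ < 1 := by
  refine lt_of_le_of_lt (norm_fac_le hQ0 hQ1 k) ?_
  have h1 : Q ^ k ≤ 1 := pow_le_one₀ hQ0.le hQ1.le
  nlinarith [norm_nonneg a, pow_nonneg hQ0.le k]

lemma log_summable (hQ0 : 0 < Q) (hQ1 : Q < 1) (ha : ‖a‖ < 1) :
    Summable fun k : ℕ => Complex.log (1 - a * (Q : ℂ) ^ k) := by
  refine Summable.of_norm_bounded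
      (g := fun k => ((‖a‖ ^ 2 * (1 - ‖a‖)⁻¹ / 2 + ‖a‖)) * Q ^ k) ?_ ?_
  · exact (summable_geometric_of_lt_one hQ0.le hQ1).mul_left _
  · intro k
    have hfac := norm_fac_lt hQ0 hQ1 ha k
    have hle := norm_fac_le (a := a) hQ0 hQ1 k
    have hb := Complex.norm_log_one_add_le (z := -(a * (Q : ℂ) ^ k)) (by simpa using hfac)
    rw [show (1 : ℂ) + -(a * (Q : ℂ) ^ k) = 1 - a * (Q : ℂ) ^ k by ring] at hb
    rw [norm_neg] at hb
    refine hb.trans ?_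
    have hQk0 : (0:ℝ) ≤ Q ^ k := pow_nonneg hQ0.le k
    have hQk1 : Q ^ k ≤ 1 := pow_le_one₀ hQ0.le hQ1.le
    have hz := norm_nonneg (a * (Q : ℂ) ^ k)
    have h1 : ‖a * (Q : ℂ) ^ k‖ ^ 2 ≤ ‖a‖ ^ 2 * Q ^ k := by
      calc ‖a * (Q : ℂ) ^ k‖ ^ 2 ≤ (‖a‖ * Q ^ k) ^ 2 := by
            exact pow_le_pow_left₀ hz hle 2
        _ = ‖a‖ ^ 2 * (Q ^ k * Q ^ k) := by ring
        _ ≤ ‖a‖ ^ 2 * Q ^ k := by nlinarith [mul_nonneg (mul_nonneg (sq_nonneg ‖a‖) hQk0) (sub_nonneg.mpr hQk1)]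
    have hna : ‖a * (Q : ℂ) ^ k‖ ≤ ‖a‖ := by
      refine hle.trans ?_
      nlinarith [norm_nonneg a]
    have h0' : (0:ℝ) < 1 - ‖a‖ := by linarith
    have h2 : (1 - ‖a * (Q : ℂ) ^ k‖)⁻¹ ≤ (1 - ‖a‖)⁻¹ := by
      have := one_div_le_one_div_of_le h0' (by linarith : 1 - ‖a‖ ≤ 1 - ‖a * (Q : ℂ) ^ k‖)
      simpa [one_div] using this
    have h3 : (0:ℝ) ≤ (1 - ‖a‖)⁻¹ := inv_nonneg.mpr h0'.le
    nlinarith [mul_le_mul h1 h2 (inv_nonneg.mpr (by linarith : (0:ℝ) ≤ 1 - ‖a * (Q : ℂ) ^ k‖))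
      (mul_nonneg (sq_nonneg ‖a‖) hQk0)]

lemma double_summable (hQ0 : 0 < Q) (hQ1 : Q < 1) (ha : ‖a‖ < 1) :
    Summable fun p : ℕ × ℕ => (a * (Q : ℂ) ^ p.1) ^ p.2 / (p.2 : ℂ) := by
  refine Summable.of_norm_bounded (g := fun p : ℕ × ℕ => Q ^ p.1 * ‖a‖ ^ p.2) ?_ ?_
  · exact Summable.mul_of_nonneg (summable_geometric_of_lt_one hQ0.le hQ1)
      (summable_geometric_of_lt_one (norm_nonneg a) ha)
      (fun k => pow_nonneg hQ0.le k) (fun n => pow_nonneg (norm_nonneg a) n)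
  · rintro ⟨k, n⟩
    rcases Nat.eq_zero_or_pos n with rfl | hn
    · simp
      positivity
    have hQk1 : Q ^ k ≤ 1 := pow_le_one₀ hQ0.le hQ1.le
    have hQk0 : (0:ℝ) ≤ Q ^ k := pow_nonneg hQ0.le k
    calc ‖(a * (Q : ℂ) ^ k) ^ n / (n : ℂ)‖ ≤ ‖(a * (Q : ℂ) ^ k) ^ n‖ := by
          rw [norm_div]
          refine div_le_self (norm_nonneg _) ?_
          simp only [Complex.norm_natCast]
          exact_mod_cast hn
      _ = ‖a * (Q : ℂ) ^ k‖ ^ n := norm_pow _ _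
      _ ≤ (‖a‖ * Q ^ k) ^ n := by
          gcongr
          exact norm_fac_le hQ0 hQ1 k
      _ = ‖a‖ ^ n * (Q ^ k) ^ n := mul_pow _ _ _
      _ ≤ ‖a‖ ^ n * Q ^ k := by
          gcongr
          exact pow_le_of_le_one hQk0 hQk1 hn.ne'
      _ = Q ^ k * ‖a‖ ^ n := mul_comm _ _

lemma col_sum (hQ0 : 0 < Q) (hQ1 : Q < 1) (ha : ‖a‖ < 1) (n : ℕ) :
    ∑' k : ℕ, (a * (Q : ℂ) ^ k) ^ n / (n : ℂ) = a ^ n / (n * (1 - (Q : ℂ) ^ n)) := by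
  rcases Nat.eq_zero_or_pos n with rfl | hn
  · simp
  have hne : ((n : ℂ)) ≠ 0 := by exact_mod_cast hn.ne'
  have hQn : ‖(Q : ℂ) ^ n‖ < 1 := by
    rw [norm_pow, Complex.norm_real, Real.norm_eq_abs, abs_of_pos hQ0]
    exact pow_lt_one₀ hQ0.le hQ1 hn.ne'
  have hgeo : ∑' k : ℕ, ((Q : ℂ) ^ n) ^ k = (1 - (Q : ℂ) ^ n)⁻¹ :=
    tsum_geometric_of_norm_lt_one hQn
  calc ∑' k : ℕ, (a * (Q : ℂ) ^ k) ^ n / (n : ℂ)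
      = ∑' k : ℕ, (a ^ n / n) * ((Q : ℂ) ^ n) ^ k := by
        congr 1; funext k; rw [mul_pow, ← pow_mul, ← pow_mul, mul_comm k n]; ring
    _ = (a ^ n / n) * (1 - (Q : ℂ) ^ n)⁻¹ := by rw [tsum_mul_left, hgeo]
    _ = a ^ n / (n * (1 - (Q : ℂ) ^ n)) := by
        have hQne : (1 : ℂ) - (Q : ℂ) ^ n ≠ 0 := one_sub_ne_zero' hQn
        field_simp

lemma tsum_log_eq (hQ0 : 0 < Q) (hQ1 : Q < 1) (ha : ‖a‖ < 1) :
    ∑' k : ℕ, Complex.log (1 - a * (Q : ℂ) ^ k) = -(FF Q a) := by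
  have hds := double_summable hQ0 hQ1 ha
  have hrow : ∀ k : ℕ, HasSum (fun n : ℕ => (a * (Q : ℂ) ^ k) ^ n / (n : ℂ))
      (-Complex.log (1 - a * (Q : ℂ) ^ k)) := fun k =>
    Complex.hasSum_taylorSeries_neg_log (norm_fac_lt hQ0 hQ1 ha k)
  have h1 : ∑' k : ℕ, Complex.log (1 - a * (Q : ℂ) ^ k)
      = -∑' k : ℕ, ∑' n : ℕ, (a * (Q : ℂ) ^ k) ^ n / (n : ℂ) := by
    rw [← tsum_neg]
    congr 1; funext k
    rw [(hrow k).tsum_eq, neg_neg]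
  rw [h1, FF, neg_inj]
  have hcomm : ∑' k : ℕ, ∑' n : ℕ, (a * (Q : ℂ) ^ k) ^ n / (n : ℂ)
      = ∑' n : ℕ, ∑' k : ℕ, (a * (Q : ℂ) ^ k) ^ n / (n : ℂ) := by
    have hds' : Summable (Function.uncurry fun (n k : ℕ) => (a * (Q : ℂ) ^ k) ^ n / ((n : ℕ) : ℂ)) := by
      have := hds.prod_symm
      exact this
    refine Summable.tsum_comm' (f := fun (n k : ℕ) => (a * (Q : ℂ) ^ k) ^ n / ((n : ℕ) : ℂ)) hds' ?_ ?_
    · exact fun n => hds'.prod_factor n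
    · exact fun k => (hrow k).summable
  rw [hcomm]
  congr 1; funext n
  exact col_sum hQ0 hQ1 ha n

lemma qPoch_eq_exp (hQ0 : 0 < Q) (hQ1 : Q < 1) (ha : ‖a‖ < 1) :
    qPoch a Q = Complex.exp (-(FF Q a)) := by
  have h2 := Complex.cexp_tsum_eq_tprod (f := fun k : ℕ => 1 - a * (Q : ℂ) ^ k)
    (fun k => one_sub_ne_zero' (norm_fac_lt hQ0 hQ1 ha k))
    (log_summable hQ0 hQ1 ha)
  beta_reduce at h2
  rw [qPoch, ← h2, tsum_log_eq hQ0 hQ1 ha]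

lemma qPoch_ne_zero (hQ0 : 0 < Q) (hQ1 : Q < 1) (ha : ‖a‖ < 1) : qPoch a Q ≠ 0 := by
  rw [qPoch_eq_exp hQ0 hQ1 ha]; exact Complex.exp_ne_zero _

lemma FF_summable (hQ0 : 0 < Q) (hQ1 : Q < 1) (ha : ‖a‖ < 1) :
    Summable fun n : ℕ => a ^ n / ((n : ℂ) * (1 - (Q : ℂ) ^ n)) := by
  refine Summable.of_norm_bounded (g := fun n => (1 - Q)⁻¹ * ‖a‖ ^ n)
    ((summable_geometric_of_lt_one (norm_nonneg a) ha).mul_left _) ?_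
  have hQ1' : (0:ℝ) < 1 - Q := by linarith
  intro n
  rcases Nat.eq_zero_or_pos n with rfl | hn
  · simpa using inv_nonneg.mpr hQ1'.le
  have hQn : Q ^ n ≤ Q := pow_le_of_le_one hQ0.le hQ1.le hn.ne'
  have h1 : ‖(n : ℂ) * (1 - (Q : ℂ) ^ n)‖ ≥ 1 - Q := by
    rw [norm_mul, Complex.norm_natCast]
    have h2 : ‖(1 : ℂ) - (Q : ℂ) ^ n‖ = 1 - Q ^ n := by
      have : ((1 - Q ^ n : ℝ) : ℂ) = 1 - (Q : ℂ) ^ n := by push_cast; ring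
      rw [← this, Complex.norm_real, Real.norm_eq_abs, abs_of_pos]
      have : Q ^ n < 1 := pow_lt_one₀ hQ0.le hQ1 hn.ne'
      linarith
    rw [h2]
    have hn1 : (1:ℝ) ≤ (n:ℝ) := by exact_mod_cast hn
    nlinarith [pow_nonneg hQ0.le n]
  rw [norm_div, norm_pow]
  rw [div_le_iff₀ (by nlinarith [norm_nonneg ((n : ℂ) * (1 - (Q : ℂ) ^ n))])]
  calc ‖a‖ ^ n ≤ (1 - Q)⁻¹ * ‖a‖ ^ n * (1 - Q) := by
        rw [mul_comm _ (1-Q), ← mul_assoc, mul_inv_cancel₀ (by linarith), one_mul]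
    _ ≤ (1 - Q)⁻¹ * ‖a‖ ^ n * ‖(n : ℂ) * (1 - (Q : ℂ) ^ n)‖ := by
        have : (0:ℝ) ≤ (1 - Q)⁻¹ * ‖a‖ ^ n := by positivity
        nlinarith

end Aux

set_option maxHeartbeats 2000000 in
/-- Resummation of the dressed phase: for `0 < q < 1`, `γ = −log q` and `|Im u| < γ`,
`Γ_{q⁴}(1 + iu/(2γ)) Γ_{q⁴}(1/2 − iu/(2γ)) / (Γ_{q⁴}(1 − iu/(2γ)) Γ_{q⁴}(1/2 + iu/(2γ)))
  = exp( Σ_{n≥1} (q^{2n}/(n(1 + q^{2n}))) (e^{2inu} − e^{−2inu}) )`,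
the four q⁴-gamma values being nonzero and the series converging absolutely. -/
theorem dressed_phase_resummation (q γ : ℝ) (hq0 : 0 < q) (hq1 : q < 1)
    (hγ : γ = -Real.log q) (u : ℂ) (hu : |u.im| < γ) :
    qGamma (q ^ 4) (1 + Complex.I * u / (2 * γ)) ≠ 0 ∧
    qGamma (q ^ 4) (1 / 2 - Complex.I * u / (2 * γ)) ≠ 0 ∧
    qGamma (q ^ 4) (1 - Complex.I * u / (2 * γ)) ≠ 0 ∧
    qGamma (q ^ 4) (1 / 2 + Complex.I * u / (2 * γ)) ≠ 0 ∧
    Summable (fun n : ℕ =>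
      ‖((q : ℂ) ^ (2 * (n + 1)) / (((n : ℂ) + 1) * (1 + (q : ℂ) ^ (2 * (n + 1))))) *
        (Complex.exp (2 * Complex.I * ((n : ℂ) + 1) * u) -
          Complex.exp (-2 * Complex.I * ((n : ℂ) + 1) * u))‖) ∧
    qGamma (q ^ 4) (1 + Complex.I * u / (2 * γ)) *
        qGamma (q ^ 4) (1 / 2 - Complex.I * u / (2 * γ)) /
        (qGamma (q ^ 4) (1 - Complex.I * u / (2 * γ)) *
          qGamma (q ^ 4) (1 / 2 + Complex.I * u / (2 * γ))) =
      Complex.exp (∑' n : ℕ,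
        ((q : ℂ) ^ (2 * (n + 1)) / (((n : ℂ) + 1) * (1 + (q : ℂ) ^ (2 * (n + 1))))) *
          (Complex.exp (2 * Complex.I * ((n : ℂ) + 1) * u) -
            Complex.exp (-2 * Complex.I * ((n : ℂ) + 1) * u))) := by
  have hγ0 : 0 < γ := lt_of_le_of_lt (abs_nonneg _) hu
  have hγc : ((γ : ℝ) : ℂ) ≠ 0 := Complex.ofReal_ne_zero.mpr hγ0.ne'
  have hq4_0 : (0:ℝ) < q ^ 4 := by positivity
  have hq4_1 : q ^ 4 < 1 := pow_lt_one₀ hq0.le hq1 (by norm_num)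
  have hlogq : Real.log q = -γ := by rw [hγ]; ring
  have hL : ((Real.log (q ^ 4) : ℝ) : ℂ) = (-4) * (γ : ℂ) := by
    rw [Real.log_pow, hlogq]; push_cast; ring
  have hcq : Complex.exp (-(γ : ℂ)) = (q : ℂ) := by
    have h2 : Real.exp (-γ) = q := by rw [hγ, neg_neg, Real.exp_log hq0]
    rw [show -(γ : ℂ) = ((-γ : ℝ) : ℂ) by push_cast; ring, ← Complex.ofReal_exp, h2]
  have h4 : Complex.exp ((-4) * (γ : ℂ)) = (q : ℂ) ^ 4 := by
    have he : ((-4 : ℂ)) * (γ : ℂ) = ((4 : ℕ) : ℂ) * (-(γ : ℂ)) := by push_cast; ring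
    rw [he, Complex.exp_nat_mul, hcq]
  have h2γ : Complex.exp ((-2) * (γ : ℂ)) = (q : ℂ) ^ 2 := by
    have he : ((-2 : ℂ)) * (γ : ℂ) = ((2 : ℕ) : ℂ) * (-(γ : ℂ)) := by push_cast; ring
    rw [he, Complex.exp_nat_mul, hcq]
  -- the four arguments of qPoch
  have hx1 : qpow (q ^ 4) (1 + Complex.I * u / (2 * γ)) =
      (q : ℂ) ^ 4 * Complex.exp (-2 * Complex.I * u) := by
    rw [qpow, hL]
    have he : (1 + Complex.I * u / (2 * (γ:ℂ))) * ((-4) * (γ:ℂ))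
        = (-4) * (γ:ℂ) + (-2 * Complex.I * u) := by field_simp; ring
    rw [he, Complex.exp_add, h4]
  have hx2 : qpow (q ^ 4) (1 / 2 - Complex.I * u / (2 * γ)) =
      (q : ℂ) ^ 2 * Complex.exp (2 * Complex.I * u) := by
    rw [qpow, hL]
    have he : (1 / 2 - Complex.I * u / (2 * (γ:ℂ))) * ((-4) * (γ:ℂ))
        = (-2) * (γ:ℂ) + (2 * Complex.I * u) := by field_simp; ring
    rw [he, Complex.exp_add, h2γ]
  have hx3 : qpow (q ^ 4) (1 - Complex.I * u / (2 * γ)) =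
      (q : ℂ) ^ 4 * Complex.exp (2 * Complex.I * u) := by
    rw [qpow, hL]
    have he : (1 - Complex.I * u / (2 * (γ:ℂ))) * ((-4) * (γ:ℂ))
        = (-4) * (γ:ℂ) + (2 * Complex.I * u) := by field_simp; ring
    rw [he, Complex.exp_add, h4]
  have hx4 : qpow (q ^ 4) (1 / 2 + Complex.I * u / (2 * γ)) =
      (q : ℂ) ^ 2 * Complex.exp (-2 * Complex.I * u) := by
    rw [qpow, hL]
    have he : (1 / 2 + Complex.I * u / (2 * (γ:ℂ))) * ((-4) * (γ:ℂ))
        = (-2) * (γ:ℂ) + (-2 * Complex.I * u) := by field_simp; ring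
    rw [he, Complex.exp_add, h2γ]
  -- norms of the exponentials
  have hEm : ‖Complex.exp (-2 * Complex.I * u)‖ = Real.exp (2 * u.im) := by
    rw [Complex.norm_exp]
    congr 1
    simp [Complex.mul_re, Complex.mul_im]
  have hEp : ‖Complex.exp (2 * Complex.I * u)‖ = Real.exp (-(2 * u.im)) := by
    rw [Complex.norm_exp]
    congr 1
    simp [Complex.mul_re, Complex.mul_im]
  have hkey : q ^ 2 * Real.exp (2 * γ) = 1 := by
    have h2l : Real.exp (2 * Real.log q) = q ^ 2 := by
      rw [two_mul, Real.exp_add, Real.exp_log hq0]; ring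
    rw [hγ, show 2 * -Real.log q = -(2 * Real.log q) by ring, Real.exp_neg, h2l]
    field_simp
  have habs := abs_lt.mp hu
  have hq2lt : q ^ 2 < 1 := by nlinarith
  have hqnorm : ‖(q : ℂ)‖ = q := by
    rw [Complex.norm_real, Real.norm_eq_abs, abs_of_pos hq0]
  have h4γ : q ^ 4 * Real.exp (2 * γ) = q ^ 2 := by nlinarith [hkey]
  have hlt1 : Real.exp (2 * u.im) < Real.exp (2 * γ) := by
    apply Real.exp_lt_exp.mpr; linarith
  have hlt2 : Real.exp (-(2 * u.im)) < Real.exp (2 * γ) := by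
    apply Real.exp_lt_exp.mpr; linarith
  have hA1 : ‖(q : ℂ) ^ 4 * Complex.exp (-2 * Complex.I * u)‖ < 1 := by
    rw [norm_mul, norm_pow, hqnorm, hEm]
    nlinarith [mul_lt_mul_of_pos_left hlt1 (pow_pos hq0 4)]
  have hA2 : ‖(q : ℂ) ^ 2 * Complex.exp (2 * Complex.I * u)‖ < 1 := by
    rw [norm_mul, norm_pow, hqnorm, hEp]
    nlinarith [mul_lt_mul_of_pos_left hlt2 (pow_pos hq0 2)]
  have hA3 : ‖(q : ℂ) ^ 4 * Complex.exp (2 * Complex.I * u)‖ < 1 := by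
    rw [norm_mul, norm_pow, hqnorm, hEp]
    nlinarith [mul_lt_mul_of_pos_left hlt2 (pow_pos hq0 4)]
  have hA4 : ‖(q : ℂ) ^ 2 * Complex.exp (-2 * Complex.I * u)‖ < 1 := by
    rw [norm_mul, norm_pow, hqnorm, hEm]
    nlinarith [mul_lt_mul_of_pos_left hlt1 (pow_pos hq0 2)]
  have hQnorm : ‖((q ^ 4 : ℝ) : ℂ)‖ < 1 := by
    rw [Complex.norm_real, Real.norm_eq_abs, abs_of_pos hq4_0]; exact hq4_1
  have hP : qPoch ((q ^ 4 : ℝ) : ℂ) (q ^ 4) ≠ 0 := qPoch_ne_zero hq4_0 hq4_1 hQnorm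
  set Lr : ℂ := ((Real.log (1 - q ^ 4) : ℝ) : ℂ) with hLr
  set P : ℂ := qPoch ((q ^ 4 : ℝ) : ℂ) (q ^ 4) with hPdef
  set A1 : ℂ := (q : ℂ) ^ 4 * Complex.exp (-2 * Complex.I * u) with hA1def
  set A2 : ℂ := (q : ℂ) ^ 2 * Complex.exp (2 * Complex.I * u) with hA2def
  set A3 : ℂ := (q : ℂ) ^ 4 * Complex.exp (2 * Complex.I * u) with hA3def
  set A4 : ℂ := (q : ℂ) ^ 2 * Complex.exp (-2 * Complex.I * u) with hA4def
  have hGa1 : qGamma (q ^ 4) (1 + Complex.I * u / (2 * γ)) =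
      P * Complex.exp ((1 - (1 + Complex.I * u / (2 * γ))) * Lr + FF (q ^ 4) A1) := by
    rw [qGamma, hx1, qPoch_eq_exp hq4_0 hq4_1 hA1, mul_comm, mul_div_assoc,
      ← Complex.exp_sub, sub_neg_eq_add]
  have hGa2 : qGamma (q ^ 4) (1 / 2 - Complex.I * u / (2 * γ)) =
      P * Complex.exp ((1 - (1 / 2 - Complex.I * u / (2 * γ))) * Lr + FF (q ^ 4) A2) := by
    rw [qGamma, hx2, qPoch_eq_exp hq4_0 hq4_1 hA2, mul_comm, mul_div_assoc,
      ← Complex.exp_sub, sub_neg_eq_add]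
  have hGa3 : qGamma (q ^ 4) (1 - Complex.I * u / (2 * γ)) =
      P * Complex.exp ((1 - (1 - Complex.I * u / (2 * γ))) * Lr + FF (q ^ 4) A3) := by
    rw [qGamma, hx3, qPoch_eq_exp hq4_0 hq4_1 hA3, mul_comm, mul_div_assoc,
      ← Complex.exp_sub, sub_neg_eq_add]
  have hGa4 : qGamma (q ^ 4) (1 / 2 + Complex.I * u / (2 * γ)) =
      P * Complex.exp ((1 - (1 / 2 + Complex.I * u / (2 * γ))) * Lr + FF (q ^ 4) A4) := by
    rw [qGamma, hx4, qPoch_eq_exp hq4_0 hq4_1 hA4, mul_comm, mul_div_assoc,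
      ← Complex.exp_sub, sub_neg_eq_add]
  refine ⟨by rw [hGa1]; exact mul_ne_zero hP (Complex.exp_ne_zero _),
    by rw [hGa2]; exact mul_ne_zero hP (Complex.exp_ne_zero _),
    by rw [hGa3]; exact mul_ne_zero hP (Complex.exp_ne_zero _),
    by rw [hGa4]; exact mul_ne_zero hP (Complex.exp_ne_zero _), ?_, ?_⟩
  · -- summability of the norms
    set r : ℝ := q ^ 2 * Real.exp (2 * |u.im|) with hrdef
    have hr0 : 0 ≤ r := by positivity
    have hr1 : r < 1 := by
      have : Real.exp (2 * |u.im|) < Real.exp (2 * γ) := by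
        apply Real.exp_lt_exp.mpr; linarith
      nlinarith [mul_lt_mul_of_pos_left this (pow_pos hq0 2)]
    refine Summable.of_nonneg_of_le (fun n => norm_nonneg _) ?_
      (((summable_geometric_of_lt_one hr0 hr1).mul_left (2 * r)))
    intro n
    have hm1 : (1:ℝ) ≤ ‖((n : ℂ) + 1) * (1 + (q : ℂ) ^ (2 * (n + 1)))‖ := by
      rw [norm_mul]
      have e1 : ((n : ℂ) + 1) = ((n + 1 : ℕ) : ℂ) := by push_cast; ring
      have e2 : (1 + (q : ℂ) ^ (2 * (n + 1))) = ((1 + q ^ (2 * (n + 1)) : ℝ) : ℂ) := by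
        push_cast; ring
      rw [e1, e2, Complex.norm_natCast, Complex.norm_real, Real.norm_eq_abs]
      have h1 : (1:ℝ) ≤ (n + 1 : ℕ) := by exact_mod_cast Nat.one_le_iff_ne_zero.mpr (Nat.succ_ne_zero n)
      have h2 : (1:ℝ) ≤ |1 + q ^ (2 * (n + 1))| := by
        rw [abs_of_pos (by positivity)]
        nlinarith [pow_nonneg hq0.le (2 * (n + 1))]
      nlinarith
    have hc : ‖(q : ℂ) ^ (2 * (n + 1)) / (((n : ℂ) + 1) * (1 + (q : ℂ) ^ (2 * (n + 1))))‖
        ≤ q ^ (2 * (n + 1)) := by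
      rw [norm_div, norm_pow, hqnorm]
      exact div_le_self (by positivity) hm1
    have hee : ‖Complex.exp (2 * Complex.I * ((n : ℂ) + 1) * u) -
        Complex.exp (-2 * Complex.I * ((n : ℂ) + 1) * u)‖ ≤ 2 * Real.exp (2 * (n + 1) * |u.im|) := by
      refine (norm_sub_le _ _).trans ?_
      have hp : ‖Complex.exp (2 * Complex.I * ((n : ℂ) + 1) * u)‖
          ≤ Real.exp (2 * (n + 1) * |u.im|) := by
        rw [Complex.norm_exp]
        apply Real.exp_le_exp.mpr
        have : (2 * Complex.I * ((n : ℂ) + 1) * u).re = -(2 * (n + 1) * u.im) := by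
          simp [Complex.mul_re, Complex.mul_im]
        rw [this]
        have := neg_abs_le u.im
        nlinarith [Nat.cast_nonneg (α := ℝ) n, abs_nonneg u.im]
      have hm : ‖Complex.exp (-2 * Complex.I * ((n : ℂ) + 1) * u)‖
          ≤ Real.exp (2 * (n + 1) * |u.im|) := by
        rw [Complex.norm_exp]
        apply Real.exp_le_exp.mpr
        have : (-2 * Complex.I * ((n : ℂ) + 1) * u).re = 2 * (n + 1) * u.im := by
          simp [Complex.mul_re, Complex.mul_im]
        rw [this]
        have := le_abs_self u.im
        nlinarith [Nat.cast_nonneg (α := ℝ) n, abs_nonneg u.im]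
      linarith
    calc ‖_ * _‖ = ‖(q : ℂ) ^ (2 * (n + 1)) / (((n : ℂ) + 1) * (1 + (q : ℂ) ^ (2 * (n + 1))))‖
          * ‖Complex.exp (2 * Complex.I * ((n : ℂ) + 1) * u) -
            Complex.exp (-2 * Complex.I * ((n : ℂ) + 1) * u)‖ := norm_mul _ _
      _ ≤ q ^ (2 * (n + 1)) * (2 * Real.exp (2 * (n + 1) * |u.im|)) := by
          exact mul_le_mul hc hee (norm_nonneg _) (by positivity)
      _ = 2 * r * r ^ n := by
          rw [hrdef]
          rw [mul_pow, ← Real.exp_nat_mul]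
          rw [show (2 * (n + 1) * |u.im|) = ((n:ℝ) * (2 * |u.im|)) + 2 * |u.im| by push_cast; ring,
            Real.exp_add]
          rw [pow_mul]
          ring
  · -- the main identity
    rw [hGa1, hGa2, hGa3, hGa4]
    have hcomb : (P * Complex.exp ((1 - (1 + Complex.I * u / (2 * γ))) * Lr + FF (q ^ 4) A1)) *
        (P * Complex.exp ((1 - (1 / 2 - Complex.I * u / (2 * γ))) * Lr + FF (q ^ 4) A2)) /
        ((P * Complex.exp ((1 - (1 - Complex.I * u / (2 * γ))) * Lr + FF (q ^ 4) A3)) *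
          (P * Complex.exp ((1 - (1 / 2 + Complex.I * u / (2 * γ))) * Lr + FF (q ^ 4) A4))) =
        Complex.exp (FF (q ^ 4) A1 + FF (q ^ 4) A2 - FF (q ^ 4) A3 - FF (q ^ 4) A4) := by
      rw [show ∀ s t : ℂ, (P * Complex.exp s) * (P * Complex.exp t) = (P * P) * Complex.exp (s + t)
        from fun s t => by rw [Complex.exp_add]; ring]
      rw [show ∀ s t : ℂ, (P * Complex.exp s) * (P * Complex.exp t) = (P * P) * Complex.exp (s + t)
        from fun s t => by rw [Complex.exp_add]; ring]
      rw [mul_div_mul_left _ _ (mul_ne_zero hP hP), ← Complex.exp_sub]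
      congr 1
      ring
    rw [hcomb]
    congr 1
    -- FF combination equals the target series
    have hs1 := FF_summable hq4_0 hq4_1 hA1
    have hs2 := FF_summable hq4_0 hq4_1 hA2
    have hs3 := FF_summable hq4_0 hq4_1 hA3
    have hs4 := FF_summable hq4_0 hq4_1 hA4
    have hQc : ((q ^ 4 : ℝ) : ℂ) = (q : ℂ) ^ 4 := by push_cast; ring
    have hFF : FF (q ^ 4) A1 + FF (q ^ 4) A2 - FF (q ^ 4) A3 - FF (q ^ 4) A4 =
        ∑' n : ℕ, (A1 ^ n / ((n : ℂ) * (1 - ((q ^ 4 : ℝ) : ℂ) ^ n))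
          + A2 ^ n / ((n : ℂ) * (1 - ((q ^ 4 : ℝ) : ℂ) ^ n))
          - A3 ^ n / ((n : ℂ) * (1 - ((q ^ 4 : ℝ) : ℂ) ^ n))
          - A4 ^ n / ((n : ℂ) * (1 - ((q ^ 4 : ℝ) : ℂ) ^ n))) := by
      rw [Summable.tsum_sub ((hs1.add hs2).sub hs3) hs4, Summable.tsum_sub (hs1.add hs2) hs3, Summable.tsum_add hs1 hs2]
      rfl
    rw [hFF]
    set g : ℕ → ℂ := fun n => (A1 ^ n / ((n : ℂ) * (1 - ((q ^ 4 : ℝ) : ℂ) ^ n))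
          + A2 ^ n / ((n : ℂ) * (1 - ((q ^ 4 : ℝ) : ℂ) ^ n))
          - A3 ^ n / ((n : ℂ) * (1 - ((q ^ 4 : ℝ) : ℂ) ^ n))
          - A4 ^ n / ((n : ℂ) * (1 - ((q ^ 4 : ℝ) : ℂ) ^ n))) with hgdef
    have hgsum : Summable g := ((hs1.add hs2).sub hs3).sub hs4
    rw [Summable.tsum_eq_zero_add hgsum]
    have hg0 : g 0 = 0 := by simp [hgdef]
    rw [hg0, zero_add]
    refine tsum_congr fun n => ?_
    -- termwise identity
    rw [hgdef]
    simp only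
    set m : ℕ := n + 1 with hmdef
    set w : ℂ := (q : ℂ) ^ (2 * (n + 1)) with hwdef
    have hmc : ((m : ℕ) : ℂ) = (n : ℂ) + 1 := by rw [hmdef]; push_cast; ring
    have hmne : ((n : ℂ) + 1) ≠ 0 := by
      have h0 : ((n + 1 : ℕ) : ℂ) ≠ 0 := Nat.cast_ne_zero.mpr n.succ_ne_zero
      push_cast at h0
      exact h0
    have hwnorm : ‖w‖ = q ^ (2 * (n + 1)) := by rw [hwdef, norm_pow, hqnorm]
    have hw1 : (1 : ℂ) - w ≠ 0 := by
      apply one_sub_ne_zero'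
      rw [hwnorm]
      exact pow_lt_one₀ hq0.le hq1 (by omega)
    have hw2 : (1 : ℂ) + w ≠ 0 := by
      have he : (1 : ℂ) + w = ((1 + q ^ (2 * (n + 1)) : ℝ) : ℂ) := by
        rw [hwdef]; push_cast; ring
      rw [he]
      exact Complex.ofReal_ne_zero.mpr (by positivity)
    have hwsq : ((q ^ 4 : ℝ) : ℂ) ^ m = w ^ 2 := by
      rw [hQc, hwdef, ← pow_mul, ← pow_mul]
      congr 1
      omega
    have hq2m : ((q : ℂ) ^ 2) ^ m = w := by
      rw [hwdef, ← pow_mul]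
    have hq4m : ((q : ℂ) ^ 4) ^ m = w ^ 2 := by
      rw [hwdef, ← pow_mul, ← pow_mul]
      congr 1
      omega
    have hEminus : Complex.exp (-2 * Complex.I * u) ^ m =
        Complex.exp (-2 * Complex.I * ((n : ℂ) + 1) * u) := by
      rw [← Complex.exp_nat_mul]
      congr 1
      rw [hmc]; ring
    have hEplus : Complex.exp (2 * Complex.I * u) ^ m =
        Complex.exp (2 * Complex.I * ((n : ℂ) + 1) * u) := by
      rw [← Complex.exp_nat_mul]
      congr 1
      rw [hmc]; ring
    have hA1m : A1 ^ m = w ^ 2 * Complex.exp (-2 * Complex.I * ((n : ℂ) + 1) * u) := by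
      rw [hA1def, mul_pow, hq4m, hEminus]
    have hA2m : A2 ^ m = w * Complex.exp (2 * Complex.I * ((n : ℂ) + 1) * u) := by
      rw [hA2def, mul_pow, hq2m, hEplus]
    have hA3m : A3 ^ m = w ^ 2 * Complex.exp (2 * Complex.I * ((n : ℂ) + 1) * u) := by
      rw [hA3def, mul_pow, hq4m, hEplus]
    have hA4m : A4 ^ m = w * Complex.exp (-2 * Complex.I * ((n : ℂ) + 1) * u) := by
      rw [hA4def, mul_pow, hq2m, hEminus]
    rw [show ((n + 1 : ℕ) : ℂ) = (n : ℂ) + 1 from by push_cast; ring] at *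
    rw [hA1m, hA2m, hA3m, hA4m, hwsq]
    have hden : (1 : ℂ) - w ^ 2 = (1 - w) * (1 + w) := by ring
    field_simp [hden]
    ring
end

section
/- (Eigenvalue ratios of the quantum transfer matrix lie strictly inside the unit disc.) Let 0 < q < 1, set γ = −log q, and let z be a complex number with |Im z| < γ/2. Then | Σ_{n∈ℤ} (−1)ⁿ q^{2(n+1/2)²} e^{i(2n+1)z} | < | Σ_{n∈ℤ} (−1)ⁿ q^{2n²} e^{2inz} |; that is, |θ₁(z, q²)| < |θ₄(z, q²)|. In particular each factor θ₁(y − iγ/2, q²)/θ₄(y − iγ/2, q²), for a particle parameter y with 0 < Im y < γ, has modulus strictly less than 1. -/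
open Complex

noncomputable section

namespace ThetaAux

/-- `z` is a positive real (as a complex number). -/
def PosR (z : ℂ) : Prop := 0 < z.re ∧ z.im = 0

/-- terms of the θ₃-type series with nome `q`. -/
def tA (q : ℝ) (w : ℂ) (n : ℤ) : ℂ :=
  ((q ^ ((n : ℝ) ^ 2) : ℝ) : ℂ) * Complex.exp (Complex.I * (n : ℂ) * w)

/-- terms of the θ₄-type series with nome `q`. -/
def tB (q : ℝ) (w : ℂ) (n : ℤ) : ℂ := (-1 : ℂ) ^ n * tA q w n

/-- terms of the θ₁-type series (without the `-i`) with nome `q`. -/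
def tC (q : ℝ) (w : ℂ) (n : ℤ) : ℂ :=
  (-1 : ℂ) ^ n * ((q ^ (((n : ℝ) + 1/2) ^ 2) : ℝ) : ℂ) *
    Complex.exp (Complex.I * ((n : ℂ) + 1/2) * w)

def thA (q : ℝ) (w : ℂ) : ℂ := ∑' n : ℤ, tA q w n
def thB (q : ℝ) (w : ℂ) : ℂ := ∑' n : ℤ, tB q w n
def thC (q : ℝ) (w : ℂ) : ℂ := ∑' n : ℤ, tC q w n

lemma re_I_mul_mul (r : ℝ) (w : ℂ) : (Complex.I * (r : ℂ) * w).re = -(r * w.im) := by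
  simp [Complex.mul_re, Complex.mul_im]

lemma norm_tA {q : ℝ} (hq : 0 < q) (w : ℂ) (n : ℤ) :
    ‖tA q w n‖ = q ^ ((n : ℝ) ^ 2) * Real.exp (-((n : ℝ) * w.im)) := by
  have h1 : ((n : ℂ)) = (((n : ℝ) : ℂ)) := by push_cast; ring
  rw [tA, norm_mul, h1, Complex.norm_exp, re_I_mul_mul]
  rw [Complex.norm_real, Real.norm_eq_abs, abs_of_pos (Real.rpow_pos_of_pos hq _)]

lemma norm_tB {q : ℝ} (hq : 0 < q) (w : ℂ) (n : ℤ) :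
    ‖tB q w n‖ = q ^ ((n : ℝ) ^ 2) * Real.exp (-((n : ℝ) * w.im)) := by
  rw [tB, norm_mul, norm_zpow, norm_neg, norm_one, one_zpow, one_mul, norm_tA hq]

lemma norm_tC {q : ℝ} (hq : 0 < q) (w : ℂ) (n : ℤ) :
    ‖tC q w n‖ = q ^ (((n : ℝ) + 1/2) ^ 2) * Real.exp (-(((n : ℝ) + 1/2) * w.im)) := by
  have h1 : ((n : ℂ) + 1/2) = ((((n : ℝ) + 1/2 : ℝ)) : ℂ) := by push_cast; ring
  rw [tC, norm_mul, norm_mul, norm_zpow, norm_neg, norm_one, one_zpow, one_mul, h1,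
    Complex.norm_exp, re_I_mul_mul]
  rw [Complex.norm_real, Real.norm_eq_abs, abs_of_pos (Real.rpow_pos_of_pos hq _)]

/-- Gaussian-dominated geometric summability over ℕ. -/
lemma summable_gauss_nat {q : ℝ} (h0 : 0 < q) (h1 : q < 1) (M : ℝ) :
    Summable (fun n : ℕ => q ^ ((n : ℝ) ^ 2) * Real.exp (M * n)) := by
  apply summable_of_ratio_norm_eventually_le (r := 1/2) (by norm_num)
  have ht : Filter.Tendsto (fun n : ℕ => q ^ n) Filter.atTop (nhds 0) :=
    tendsto_pow_atTop_nhds_zero_of_lt_one h0.le h1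
  have hev : ∀ᶠ n : ℕ in Filter.atTop, q ^ n < (1/2) * Real.exp (-M) :=
    ht.eventually (gt_mem_nhds (by positivity))
  filter_upwards [hev] with n hn
  have hq2 : q ^ ((n : ℝ) ^ 2) ≤ 1 := by
    apply Real.rpow_le_one h0.le h1.le (by positivity)
  have key : q ^ (((n : ℕ) + 1 : ℝ) ^ 2) * Real.exp (M * ((n : ℕ) + 1))
      ≤ (1/2) * (q ^ ((n : ℝ) ^ 2) * Real.exp (M * n)) := by
    have e1 : ((n : ℝ) + 1) ^ 2 = (n : ℝ) ^ 2 + (2 * n + 1) := by ring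
    rw [e1, Real.rpow_add h0, mul_comm M ((n : ℝ) + 1)]
    have e2 : ((n : ℝ) + 1) * M = (n : ℝ) * M + M := by ring
    rw [e2, Real.exp_add]
    have h3 : q ^ ((2 : ℝ) * n + 1) ≤ q ^ (n : ℝ) := by
      apply Real.rpow_le_rpow_of_exponent_ge h0 h1.le; push_cast; linarith [Nat.cast_nonneg (α := ℝ) n]
    have h4 : q ^ ((n : ℝ)) = q ^ n := Real.rpow_natCast q n
    have h5 : q ^ ((2 : ℝ) * n + 1) * Real.exp M ≤ 1/2 := by
      calc q ^ ((2 : ℝ) * n + 1) * Real.exp M ≤ q ^ n * Real.exp M := by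
            apply mul_le_mul_of_nonneg_right (h4 ▸ h3) (Real.exp_nonneg M)
        _ ≤ ((1/2) * Real.exp (-M)) * Real.exp M := by
            apply mul_le_mul_of_nonneg_right hn.le (Real.exp_nonneg M)
        _ = 1/2 := by rw [mul_assoc, ← Real.exp_add]; simp
    calc q ^ ((n : ℝ) ^ 2) * q ^ ((2:ℝ) * n + 1) * (Real.exp ((n:ℝ) * M) * Real.exp M)
        = (q ^ ((2:ℝ) * n + 1) * Real.exp M) * (q ^ ((n : ℝ) ^ 2) * Real.exp ((n:ℝ) * M)) := by ring
      _ ≤ (1/2) * (q ^ ((n : ℝ) ^ 2) * Real.exp ((n:ℝ)*M)) := by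
          apply mul_le_mul_of_nonneg_right h5 (by positivity)
      _ = (1/2) * (q ^ ((n : ℝ) ^ 2) * Real.exp (M * n)) := by rw [mul_comm (n:ℝ) M]
  have hnorm : ∀ m : ℕ, ‖q ^ ((m : ℝ) ^ 2) * Real.exp (M * m)‖ = q ^ ((m : ℝ) ^ 2) * Real.exp (M * m) := by
    intro m; rw [Real.norm_eq_abs, abs_of_pos (by positivity)]
  rw [hnorm, hnorm]
  calc q ^ (((n+1 : ℕ) : ℝ) ^ 2) * Real.exp (M * ((n+1 : ℕ) : ℝ))
      = q ^ (((n : ℕ) + 1 : ℝ) ^ 2) * Real.exp (M * ((n : ℕ) + 1)) := by push_cast; ring_nf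
    _ ≤ 1/2 * (q ^ ((n : ℝ) ^ 2) * Real.exp (M * n)) := key

/-- Gaussian-dominated summability over ℤ. -/
lemma summable_gauss {q : ℝ} (h0 : 0 < q) (h1 : q < 1) (M : ℝ) :
    Summable (fun n : ℤ => q ^ ((n : ℝ) ^ 2) * Real.exp (M * |(n : ℝ)|)) := by
  apply Summable.of_nat_of_neg_add_one
  · apply (summable_gauss_nat h0 h1 M).congr
    intro n
    have hn : |((n : ℤ) : ℝ)| = (n : ℝ) := by
      push_cast; exact _root_.abs_of_nonneg (Nat.cast_nonneg n)
    rw [hn]; push_cast; ring_nf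
  · apply ((summable_gauss_nat h0 h1 M).comp_injective (add_right_injective 1)).congr
    intro n
    have e1 : |((-((n : ℤ) + 1)) : ℝ)| = ((1 + n : ℕ) : ℝ) := by
      push_cast
      rw [abs_neg, _root_.abs_of_nonneg (by positivity : (0:ℝ) ≤ (n:ℝ) + 1)]
      ring
    have e2 : (((-((n : ℤ) + 1))) : ℝ) ^ 2 = ((1 + n : ℕ) : ℝ) ^ 2 := by push_cast; ring
    simp only [Function.comp_apply]
    push_cast [e1, e2]
    ring_nf
    rw [show (-1 - (n:ℝ)) = -(1 + n) by ring, abs_neg,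
      _root_.abs_of_nonneg (by positivity : (0:ℝ) ≤ 1 + (n:ℝ))]
    ring_nf

lemma summable_norm_tA {q : ℝ} (h0 : 0 < q) (h1 : q < 1) (w : ℂ) :
    Summable (fun n : ℤ => ‖tA q w n‖) := by
  refine Summable.of_nonneg_of_le (fun n => norm_nonneg _) (fun n => ?_)
    (summable_gauss h0 h1 (M := |w.im|))
  · 
    rw [norm_tA h0]
    apply mul_le_mul_of_nonneg_left _ (Real.rpow_nonneg h0.le _)
    apply Real.exp_le_exp.2
    calc -((n:ℝ) * w.im) ≤ |(n:ℝ) * w.im| := neg_le_abs _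
      _ = |w.im| * |(n:ℝ)| := by rw [abs_mul]; ring

lemma summable_norm_tB {q : ℝ} (h0 : 0 < q) (h1 : q < 1) (w : ℂ) :
    Summable (fun n : ℤ => ‖tB q w n‖) := by
  apply (summable_norm_tA h0 h1 w).congr
  intro n; rw [norm_tA h0, norm_tB h0]

lemma summable_norm_tC {q : ℝ} (h0 : 0 < q) (h1 : q < 1) (w : ℂ) :
    Summable (fun n : ℤ => ‖tC q w n‖) := by
  refine Summable.of_nonneg_of_le (fun n => norm_nonneg _) (fun n => ?_)
    ((summable_gauss h0 h1 (M := |Real.log q| + |w.im|)).mul_left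
      (q ^ (1/4 : ℝ) * Real.exp (|w.im| / 2)))
  · 
    rw [norm_tC h0]
    have e1 : ((n:ℝ) + 1/2) ^ 2 = (n:ℝ)^2 + ((n:ℝ) + 1/4) := by ring
    rw [e1, Real.rpow_add h0, Real.rpow_add h0]
    have b1 : q ^ ((n:ℝ)) ≤ Real.exp (|Real.log q| * |(n:ℝ)|) := by
      rw [Real.rpow_def_of_pos h0, Real.exp_le_exp]
      calc Real.log q * n ≤ |Real.log q * n| := le_abs_self _
        _ = |Real.log q| * |(n:ℝ)| := abs_mul _ _
    have b2 : Real.exp (-(((n:ℝ) + 1/2) * w.im)) ≤ Real.exp (|w.im| * |(n:ℝ)|) * Real.exp (|w.im| / 2) := by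
      rw [← Real.exp_add, Real.exp_le_exp]
      calc -(((n:ℝ) + 1/2) * w.im) ≤ |((n:ℝ) + 1/2) * w.im| := neg_le_abs _
        _ ≤ (|(n:ℝ)| + 1/2) * |w.im| := by
            rw [abs_mul]
            apply mul_le_mul_of_nonneg_right _ (abs_nonneg _)
            calc |(n:ℝ) + 1/2| ≤ |(n:ℝ)| + |(1/2 : ℝ)| := abs_add_le _ _
              _ = |(n:ℝ)| + 1/2 := by norm_num
        _ = |w.im| * |(n:ℝ)| + |w.im| / 2 := by ring
    calc q ^ ((n:ℝ)^2) * (q ^ ((n:ℝ)) * q ^ (1/4 : ℝ)) * Real.exp (-(((n:ℝ) + 1/2) * w.im))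
        ≤ q ^ ((n:ℝ)^2) * (Real.exp (|Real.log q| * |(n:ℝ)|) * q ^ (1/4 : ℝ)) *
            (Real.exp (|w.im| * |(n:ℝ)|) * Real.exp (|w.im| / 2)) := by
          apply mul_le_mul
          · apply mul_le_mul_of_nonneg_left _ (Real.rpow_nonneg h0.le _)
            apply mul_le_mul_of_nonneg_right b1 (Real.rpow_nonneg h0.le _)
          · exact b2
          · positivity
          · positivity
      _ = (q ^ (1/4:ℝ) * Real.exp (|w.im|/2)) * (q ^ ((n:ℝ)^2) *
            Real.exp (|Real.log q| * |(n:ℝ)| + |w.im| * |(n:ℝ)|)) := by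
          rw [Real.exp_add]; ring
      _ = (q ^ (1/4:ℝ) * Real.exp (|w.im|/2)) * (q ^ ((n:ℝ)^2) *
            Real.exp ((|Real.log q| + |w.im|) * |(n:ℝ)|)) := by rw [add_mul]

lemma summable_tA {q : ℝ} (h0 : 0 < q) (h1 : q < 1) (w : ℂ) : Summable (tA q w) :=
  (summable_norm_tA h0 h1 w).of_norm

lemma summable_tB {q : ℝ} (h0 : 0 < q) (h1 : q < 1) (w : ℂ) : Summable (tB q w) :=
  (summable_norm_tB h0 h1 w).of_norm

lemma summable_tC {q : ℝ} (h0 : 0 < q) (h1 : q < 1) (w : ℂ) : Summable (tC q w) :=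
  (summable_norm_tC h0 h1 w).of_norm


lemma neg_one_zpow_add (a b : ℤ) : (-1 : ℂ) ^ (a + b) = (-1) ^ a * (-1) ^ b :=
  zpow_add₀ (by norm_num) a b

lemma neg_one_zpow_sub (a b : ℤ) : (-1 : ℂ) ^ (a - b) = (-1) ^ a * (-1) ^ b := by
  have h2 : (-1 : ℂ) ^ (2 * b) = 1 := Even.neg_one_zpow (even_two_mul b)
  calc (-1 : ℂ) ^ (a - b) = (-1 : ℂ) ^ (a - b) * (-1 : ℂ) ^ (2 * b) := by rw [h2, mul_one]
    _ = (-1 : ℂ) ^ (a + b) := by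
        rw [← zpow_add₀ (by norm_num : (-1 : ℂ) ≠ 0)]
        congr 1; ring
    _ = (-1) ^ a * (-1) ^ b := zpow_add₀ (by norm_num) a b

lemma star_tA (q : ℝ) (w : ℂ) (n : ℤ) :
    (starRingEnd ℂ) (tA q w n) = tA q (-(starRingEnd ℂ) w) n := by
  rw [tA, tA, map_mul, Complex.conj_ofReal, ← Complex.exp_conj]
  congr 2
  simp only [map_mul, Complex.conj_I, map_intCast]
  ring

lemma star_tB (q : ℝ) (w : ℂ) (n : ℤ) :
    (starRingEnd ℂ) (tB q w n) = tB q (-(starRingEnd ℂ) w) n := by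
  rw [tB, tB, map_mul, star_tA]
  congr 1
  rw [map_zpow₀]
  norm_num

lemma star_tC (q : ℝ) (w : ℂ) (n : ℤ) :
    (starRingEnd ℂ) (tC q w n) = tC q (-(starRingEnd ℂ) w) n := by
  rw [tC, tC, map_mul, map_mul, Complex.conj_ofReal, ← Complex.exp_conj]
  congr 2
  · rw [map_zpow₀]; norm_num
  · simp only [map_mul, map_add, map_div₀, map_one, map_ofNat, Complex.conj_I, map_intCast]
    ring

lemma star_thA (q : ℝ) (w : ℂ) :
    (starRingEnd ℂ) (thA q w) = thA q (-(starRingEnd ℂ) w) := by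
  rw [show (starRingEnd ℂ) (thA q w) = star (thA q w) from rfl, thA, thA, tsum_star]
  exact tsum_congr fun n => star_tA q w n

lemma star_thB (q : ℝ) (w : ℂ) :
    (starRingEnd ℂ) (thB q w) = thB q (-(starRingEnd ℂ) w) := by
  rw [show (starRingEnd ℂ) (thB q w) = star (thB q w) from rfl, thB, thB, tsum_star]
  exact tsum_congr fun n => star_tB q w n

lemma star_thC (q : ℝ) (w : ℂ) :
    (starRingEnd ℂ) (thC q w) = thC q (-(starRingEnd ℂ) w) := by
  rw [show (starRingEnd ℂ) (thC q w) = star (thC q w) from rfl, thC, thC, tsum_star]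
  exact tsum_congr fun n => star_tC q w n

lemma thA_neg (q : ℝ) (w : ℂ) : thA q (-w) = thA q w := by
  rw [thA, thA, ← (Equiv.neg ℤ).tsum_eq (tA q (-w))]
  apply tsum_congr
  intro n
  show tA q (-w) (-n) = tA q w n
  rw [tA, tA,
    show (((-n : ℤ) : ℝ)) ^ 2 = ((n : ℝ)) ^ 2 by push_cast; ring,
    show Complex.I * ((-n : ℤ) : ℂ) * (-w) = Complex.I * (n : ℂ) * w by push_cast; ring]

lemma neg_one_zpow_neg (n : ℤ) : (-1 : ℂ) ^ (-n) = (-1 : ℂ) ^ n := by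
  rcases Int.even_or_odd n with h | h
  · rw [Even.neg_one_zpow h, Even.neg_one_zpow h.neg]
  · rw [Odd.neg_one_zpow h, Odd.neg_one_zpow h.neg]

lemma thB_neg (q : ℝ) (w : ℂ) : thB q (-w) = thB q w := by
  rw [thB, thB, ← (Equiv.neg ℤ).tsum_eq (tB q (-w))]
  apply tsum_congr
  intro n
  show tB q (-w) (-n) = tB q w n
  rw [tB, tB, tA, tA, neg_one_zpow_neg,
    show (((-n : ℤ) : ℝ)) ^ 2 = ((n : ℝ)) ^ 2 by push_cast; ring,
    show Complex.I * ((-n : ℤ) : ℂ) * (-w) = Complex.I * (n : ℂ) * w by push_cast; ring]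

lemma thC_neg (q : ℝ) (w : ℂ) : thC q (-w) = -thC q w := by
  rw [thC, thC, ← (Equiv.subLeft (-1 : ℤ)).tsum_eq (tC q (-w)), ← tsum_neg]
  apply tsum_congr
  intro n
  show tC q (-w) (-1 - n) = -tC q w n
  rw [tC, tC]
  have hs : (-1 : ℂ) ^ (-1 - n) = -((-1 : ℂ) ^ n) := by
    rw [neg_one_zpow_sub (-1) n]
    norm_num
  rw [hs]
  rw [show ((((-1 - n : ℤ) : ℝ)) + 1/2) ^ 2 = (((n : ℝ)) + 1/2) ^ 2 by push_cast; ring,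
    show Complex.I * (((-1 - n : ℤ) : ℂ) + 1/2) * (-w) = Complex.I * ((n : ℂ) + 1/2) * w by
      push_cast; ring]
  ring

lemma thC_zero (q : ℝ) : thC q 0 = 0 := by
  have h := thC_neg q 0
  rw [neg_zero] at h
  have h2 : (2 : ℂ) * thC q 0 = 0 := by linear_combination h
  have := mul_eq_zero.mp h2
  simpa using this

/-- The even/odd splitting of a summable family over `ℤ × ℤ` along the
parity of the sum of coordinates, reindexed by `(m, n) ↦ (m + n, m - n)`
resp. `(m, n) ↦ (m + n + 1, m - n)`. -/
lemma tsum_split (g : ℤ × ℤ → ℂ) (hg : Summable g) :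
    ∑' p : ℤ × ℤ, g p =
      (∑' p : ℤ × ℤ, g (p.1 + p.2, p.1 - p.2)) +
      (∑' p : ℤ × ℤ, g (p.1 + p.2 + 1, p.1 - p.2)) := by
  classical
  set s : Set (ℤ × ℤ) := {p : ℤ × ℤ | (p.1 + p.2) % 2 = 0} with hs
  let e₁ : ℤ × ℤ ≃ s :=
    { toFun := fun p => ⟨(p.1 + p.2, p.1 - p.2), by simp only [hs, Set.mem_setOf_eq]; omega⟩
      invFun := fun c => ((c.1.1 + c.1.2) / 2, (c.1.1 - c.1.2) / 2)
      left_inv := by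
        rintro ⟨m, n⟩
        simp only [Prod.mk.injEq]
        omega
      right_inv := by
        rintro ⟨⟨k, j⟩, hk⟩
        simp only [hs, Set.mem_setOf_eq] at hk
        apply Subtype.ext
        simp only [Prod.mk.injEq]
        omega }
  let e₂ : ℤ × ℤ ≃ ↥sᶜ :=
    { toFun := fun p => ⟨(p.1 + p.2 + 1, p.1 - p.2), by
        simp only [hs, Set.mem_compl_iff, Set.mem_setOf_eq]; omega⟩
      invFun := fun c => ((c.1.1 + c.1.2 - 1) / 2, (c.1.1 - c.1.2 - 1) / 2)
      left_inv := by
        rintro ⟨m, n⟩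
        simp only [Prod.mk.injEq]
        omega
      right_inv := by
        rintro ⟨⟨k, j⟩, hk⟩
        simp only [hs, Set.mem_compl_iff, Set.mem_setOf_eq] at hk
        apply Subtype.ext
        simp only [Prod.mk.injEq]
        omega }
  have h1 : ∑' (x : s), g x = ∑' p : ℤ × ℤ, g (p.1 + p.2, p.1 - p.2) := by
    rw [← e₁.tsum_eq (fun x : s => g x)]
    exact tsum_congr fun c => rfl
  have h2 : ∑' (x : ↥sᶜ), g x = ∑' p : ℤ × ℤ, g (p.1 + p.2 + 1, p.1 - p.2) := by
    rw [← e₂.tsum_eq (fun x : ↥sᶜ => g x)]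
    exact tsum_congr fun c => rfl
  rw [← h1, ← h2]
  exact (Summable.tsum_add_tsum_compl (hg.subtype s) (hg.subtype sᶜ)).symm

lemma sq_rpow {q : ℝ} (h0 : 0 < q) (y : ℝ) : (q ^ 2) ^ y = q ^ (2 * y) := by
  rw [← Real.rpow_natCast q 2, ← Real.rpow_mul h0.le]
  norm_num

lemma four_rpow {q : ℝ} (h0 : 0 < q) (y : ℝ) : (q ^ 4) ^ y = q ^ (4 * y) := by
  rw [← Real.rpow_natCast q 4, ← Real.rpow_mul h0.le]
  norm_num

/-- The key quadratic theta identity. -/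
lemma key_id {q : ℝ} (h0 : 0 < q) (h1 : q < 1) (u v : ℂ) :
    thA q u * thB q v =
      thB (q ^ 2) (u + v) * thB (q ^ 2) (u - v) +
      thC (q ^ 2) (u + v) * thC (q ^ 2) (u - v) := by
  have h0' : (0 : ℝ) < q ^ 2 := by positivity
  have h1' : q ^ 2 < 1 := by nlinarith
  rw [thA, thB, tsum_mul_tsum_of_summable_norm (summable_norm_tA h0 h1 u) (summable_norm_tB h0 h1 v)]
  rw [thB, thB, tsum_mul_tsum_of_summable_norm (summable_norm_tB h0' h1' (u+v)) (summable_norm_tB h0' h1' (u-v))]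
  rw [thC, thC, tsum_mul_tsum_of_summable_norm (summable_norm_tC h0' h1' (u+v)) (summable_norm_tC h0' h1' (u-v))]
  rw [tsum_split (fun p : ℤ × ℤ => tA q u p.1 * tB q v p.2)
    (summable_mul_of_summable_norm (summable_norm_tA h0 h1 u) (summable_norm_tB h0 h1 v))]
  congr 1
  · apply tsum_congr
    rintro ⟨K, J⟩
    show tA q u (K + J) * tB q v (K - J) = _
    rw [tA, tB, tA, tB, tA, tB, tA]
    rw [neg_one_zpow_sub K J]
    have hc : ((q ^ (((K + J : ℤ) : ℝ) ^ 2) : ℝ) : ℂ) * ((q ^ (((K - J : ℤ) : ℝ) ^ 2) : ℝ) : ℂ)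
        = (((q ^ 2) ^ ((K : ℝ) ^ 2) : ℝ) : ℂ) * (((q ^ 2) ^ ((J : ℝ) ^ 2) : ℝ) : ℂ) := by
      rw [← Complex.ofReal_mul, ← Complex.ofReal_mul]
      congr 1
      rw [← Real.rpow_add h0, sq_rpow h0, sq_rpow h0, ← Real.rpow_add h0]
      congr 1
      push_cast; ring
    have he : Complex.exp (Complex.I * ((K + J : ℤ) : ℂ) * u) *
          Complex.exp (Complex.I * ((K - J : ℤ) : ℂ) * v)
        = Complex.exp (Complex.I * (K : ℂ) * (u + v)) *
          Complex.exp (Complex.I * (J : ℂ) * (u - v)) := by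
      rw [← Complex.exp_add, ← Complex.exp_add]
      congr 1
      push_cast; ring
    calc ((q ^ (((K + J : ℤ) : ℝ) ^ 2) : ℝ) : ℂ) * Complex.exp (Complex.I * ((K + J : ℤ) : ℂ) * u) *
          ((-1 : ℂ) ^ K * (-1 : ℂ) ^ J *
            (((q ^ (((K - J : ℤ) : ℝ) ^ 2) : ℝ) : ℂ) * Complex.exp (Complex.I * ((K - J : ℤ) : ℂ) * v)))
        = ((-1 : ℂ) ^ K * (-1 : ℂ) ^ J) *
            ((((q ^ (((K + J : ℤ) : ℝ) ^ 2) : ℝ) : ℂ) * ((q ^ (((K - J : ℤ) : ℝ) ^ 2) : ℝ) : ℂ)) *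
            (Complex.exp (Complex.I * ((K + J : ℤ) : ℂ) * u) *
              Complex.exp (Complex.I * ((K - J : ℤ) : ℂ) * v))) := by ring
      _ = ((-1 : ℂ) ^ K * (-1 : ℂ) ^ J) *
            (((((q ^ 2) ^ ((K : ℝ) ^ 2) : ℝ) : ℂ) * (((q ^ 2) ^ ((J : ℝ) ^ 2) : ℝ) : ℂ)) *
            (Complex.exp (Complex.I * (K : ℂ) * (u + v)) *
              Complex.exp (Complex.I * (J : ℂ) * (u - v)))) := by rw [hc, he]
      _ = _ := by ring
  · apply tsum_congr
    rintro ⟨K, J⟩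
    show tA q u (K + J + 1) * tB q v (K - J) = _
    rw [tA, tB, tA, tC, tC]
    rw [neg_one_zpow_sub K J]
    have hc : ((q ^ (((K + J + 1 : ℤ) : ℝ) ^ 2) : ℝ) : ℂ) * ((q ^ (((K - J : ℤ) : ℝ) ^ 2) : ℝ) : ℂ)
        = (((q ^ 2) ^ (((K : ℝ) + 1/2) ^ 2) : ℝ) : ℂ) * (((q ^ 2) ^ (((J : ℝ) + 1/2) ^ 2) : ℝ) : ℂ) := by
      rw [← Complex.ofReal_mul, ← Complex.ofReal_mul]
      congr 1
      rw [← Real.rpow_add h0, sq_rpow h0, sq_rpow h0, ← Real.rpow_add h0]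
      congr 1
      push_cast; ring
    have he : Complex.exp (Complex.I * ((K + J + 1 : ℤ) : ℂ) * u) *
          Complex.exp (Complex.I * ((K - J : ℤ) : ℂ) * v)
        = Complex.exp (Complex.I * ((K : ℂ) + 1/2) * (u + v)) *
          Complex.exp (Complex.I * ((J : ℂ) + 1/2) * (u - v)) := by
      rw [← Complex.exp_add, ← Complex.exp_add]
      congr 1
      push_cast; ring
    calc ((q ^ (((K + J + 1 : ℤ) : ℝ) ^ 2) : ℝ) : ℂ) * Complex.exp (Complex.I * ((K + J + 1 : ℤ) : ℂ) * u) *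
          ((-1 : ℂ) ^ K * (-1 : ℂ) ^ J *
            (((q ^ (((K - J : ℤ) : ℝ) ^ 2) : ℝ) : ℂ) * Complex.exp (Complex.I * ((K - J : ℤ) : ℂ) * v)))
        = ((-1 : ℂ) ^ K * (-1 : ℂ) ^ J) *
            ((((q ^ (((K + J + 1 : ℤ) : ℝ) ^ 2) : ℝ) : ℂ) * ((q ^ (((K - J : ℤ) : ℝ) ^ 2) : ℝ) : ℂ)) *
            (Complex.exp (Complex.I * ((K + J + 1 : ℤ) : ℂ) * u) *
              Complex.exp (Complex.I * ((K - J : ℤ) : ℂ) * v))) := by ring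
      _ = ((-1 : ℂ) ^ K * (-1 : ℂ) ^ J) *
            ((((((q ^ 2) ^ (((K : ℝ) + 1/2) ^ 2)) : ℝ) : ℂ) * ((((q ^ 2) ^ (((J : ℝ) + 1/2) ^ 2)) : ℝ) : ℂ)) *
            (Complex.exp (Complex.I * ((K : ℂ) + 1/2) * (u + v)) *
              Complex.exp (Complex.I * ((J : ℂ) + 1/2) * (u - v)))) := by rw [hc, he]
      _ = _ := by ring


/-- duplication identity for the sum `thA + thB`. -/
lemma id3 {q : ℝ} (h0 : 0 < q) (h1 : q < 1) (w : ℂ) :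
    thA q w + thB q w = 2 * thA (q ^ 4) (2 * w) := by
  rw [thA, thB, ← Summable.tsum_add (summable_tA h0 h1 w) (summable_tB h0 h1 w), thA, ← tsum_mul_left]
  have hinj : Function.Injective (fun K : ℤ => 2 * K) := fun a b h => by
    simpa using h
  have hsupp : (Function.support fun n : ℤ => tA q w n + tB q w n) ⊆
      Set.range (fun K : ℤ => 2 * K) := by
    intro x hx
    rcases Int.even_or_odd x with he | ho
    · obtain ⟨k, hk⟩ := he
      exact ⟨k, show 2 * k = x by omega⟩
    · exfalso
      apply hx
      show tA q w x + tB q w x = 0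
      rw [tB, Odd.neg_one_zpow ho]
      ring
  rw [← Function.Injective.tsum_eq hinj hsupp]
  apply tsum_congr
  intro K
  show tA q w (2 * K) + tB q w (2 * K) = 2 * tA (q ^ 4) (2 * w) K
  have hB : tB q w (2 * K) = tA q w (2 * K) := by
    rw [tB, Even.neg_one_zpow (even_two_mul K), one_mul]
  rw [hB, tA, tA,
    show (((2 * K : ℤ) : ℝ)) ^ 2 = 4 * ((K : ℝ)) ^ 2 by push_cast; ring,
    show Complex.I * ((2 * K : ℤ) : ℂ) * w = Complex.I * (K : ℂ) * (2 * w) by push_cast; ring,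
    four_rpow h0]
  ring

/-- the combined geometric majorant on `ℤ`. -/
lemma geom_hasSum {r : ℝ} (hr0 : 0 ≤ r) (hr1 : r < 1) :
    HasSum (fun n : ℤ => if n = 0 then 0 else r ^ n.natAbs) (2 * (r / (1 - r))) := by
  classical
  set F : ℤ → ℝ := fun n => if n = 0 then 0 else r ^ n.natAbs with hF
  have hgeo : HasSum (fun n : ℕ => r ^ (n + 1)) (r / (1 - r)) := by
    have h := (hasSum_geometric_of_lt_one hr0 hr1).mul_left r
    rw [← div_eq_mul_inv] at h
    have he : (fun n : ℕ => r * r ^ n) = fun n : ℕ => r ^ (n + 1) :=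
      funext fun n => (pow_succ' r n).symm
    rwa [he] at h
  have h1 : HasSum (fun n : ℕ => F ↑n) (r / (1 - r)) := by
    have hshift : HasSum (fun n : ℕ => F ↑(n + 1)) (r / (1 - r)) := by
      have he : (fun n : ℕ => F ↑(n + 1)) = fun n : ℕ => r ^ (n + 1) := by
        funext n
        rw [hF]
        simp only []
        rw [if_neg (by exact_mod_cast Nat.succ_ne_zero n),
          show ((↑(n + 1) : ℤ)).natAbs = n + 1 by omega]
      rw [he]
      exact hgeo
    have h := (hasSum_nat_add_iff (f := fun n : ℕ => F ↑n) 1).mp hshift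
    simpa [hF] using h
  have h2 : HasSum (fun n : ℕ => F (-(↑n + 1))) (r / (1 - r)) := by
    have he : (fun n : ℕ => F (-(↑n + 1))) = fun n : ℕ => r ^ (n + 1) := by
      funext n
      rw [hF]
      simp only []
      rw [if_neg (by omega), show (-((n : ℤ) + 1)).natAbs = n + 1 by omega]
    rw [he]
    exact hgeo
  have h := HasSum.of_nat_of_neg_add_one h1 h2
  rwa [show r / (1 - r) + r / (1 - r) = 2 * (r / (1 - r)) by ring] at h


/-- crude tail estimate: if all nonzero-index terms are geometrically small
(with ratio `< 1/3`) and the zero term is `1`, the sum has positive real part. -/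
lemma tail_re_pos {f : ℤ → ℂ} {r : ℝ} (hr0 : 0 ≤ r) (hr : r < 1/3)
    (hf : Summable f) (h00 : f 0 = 1) (hb : ∀ n : ℤ, n ≠ 0 → ‖f n‖ ≤ r ^ n.natAbs) :
    0 < (∑' n : ℤ, f n).re := by
  classical
  have hr1 : r < 1 := lt_trans hr (by norm_num)
  rw [Summable.tsum_eq_add_tsum_ite hf 0, h00]
  have hgs := geom_hasSum hr0 hr1
  have hmaj : Summable (fun n : ℤ => if n = 0 then 0 else r ^ n.natAbs) := hgs.summable
  have hbound : ∀ n : ℤ, ‖if n = 0 then 0 else f n‖ ≤ (if n = 0 then 0 else r ^ n.natAbs) := by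
    intro n
    split_ifs with h
    · simp
    · exact hb n h
  have hnorm_sum : Summable (fun n : ℤ => ‖if n = 0 then 0 else f n‖) :=
    Summable.of_nonneg_of_le (fun n => norm_nonneg _) hbound hmaj
  have hT : ‖∑' n : ℤ, (if n = 0 then 0 else f n)‖ ≤ 2 * (r / (1 - r)) := by
    calc ‖∑' n : ℤ, (if n = 0 then 0 else f n)‖
        ≤ ∑' n : ℤ, ‖if n = 0 then 0 else f n‖ := norm_tsum_le_tsum_norm hnorm_sum
      _ ≤ ∑' n : ℤ, (if n = 0 then 0 else r ^ n.natAbs) := Summable.tsum_le_tsum hbound hnorm_sum hmaj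
      _ = 2 * (r / (1 - r)) := hgs.tsum_eq
  have hlt : 2 * (r / (1 - r)) < 1 := by
    have h1r : 0 < 1 - r := by linarith
    rw [mul_div_assoc', div_lt_one h1r]
    linarith
  have habs : |(∑' n : ℤ, (if n = 0 then 0 else f n)).re|
      ≤ ‖∑' n : ℤ, (if n = 0 then 0 else f n)‖ := by
    exact Complex.abs_re_le_norm _
  simp only [Complex.add_re, Complex.one_re]
  have := neg_abs_le ((∑' n : ℤ, (if n = 0 then 0 else f n)).re)
  linarith

lemma PosR.mul {x y : ℂ} (hx : PosR x) (hy : PosR y) : PosR (x * y) := by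
  obtain ⟨hx1, hx2⟩ := hx
  obtain ⟨hy1, hy2⟩ := hy
  constructor
  · rw [Complex.mul_re, hx2, hy2]
    nlinarith
  · rw [Complex.mul_im, hx2, hy2]
    ring

lemma posR_of_mul_add {x y : ℂ} (hxy : PosR (x * y)) (hsum : PosR (x + y))
    (hx : x.im = 0) (hy : y.im = 0) : PosR x ∧ PosR y := by
  have h1 : 0 < x.re * y.re := by
    have := hxy.1
    rw [Complex.mul_re, hx, hy] at this
    simpa using this
  have h2 : 0 < x.re + y.re := by
    have := hsum.1
    rwa [Complex.add_re] at this
  exact ⟨⟨by nlinarith, hx⟩, ⟨by nlinarith, hy⟩⟩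

lemma PosR.cancel {x y : ℂ} (hx : PosR x) (hxy : PosR (x * y)) (hy : y.im = 0) : PosR y := by
  refine ⟨?_, hy⟩
  have h := hxy.1
  rw [Complex.mul_re, hx.2, hy] at h
  nlinarith [hx.1]

lemma PosR.two_mul {x : ℂ} (hx : PosR x) : PosR (2 * x) := by
  constructor
  · rw [Complex.mul_re, Complex.re_ofNat, Complex.im_ofNat, hx.2]
    nlinarith [hx.1]
  · rw [Complex.mul_im, Complex.re_ofNat, Complex.im_ofNat, hx.2]
    ring

lemma im_thA_real (q u : ℝ) : (thA q (u : ℂ)).im = 0 := by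
  have h := star_thA q (u : ℂ)
  rw [Complex.conj_ofReal, thA_neg] at h
  exact Complex.conj_eq_iff_im.mp h

lemma im_thB_real (q u : ℝ) : (thB q (u : ℂ)).im = 0 := by
  have h := star_thB q (u : ℂ)
  rw [Complex.conj_ofReal, thB_neg] at h
  exact Complex.conj_eq_iff_im.mp h

lemma im_thB_imag (q t : ℝ) : (thB q (2 * Complex.I * t)).im = 0 := by
  have h := star_thB q (2 * Complex.I * t)
  have harg : -((starRingEnd ℂ) (2 * Complex.I * (t : ℂ))) = 2 * Complex.I * (t : ℂ) := by
    simp only [map_mul, Complex.conj_I, Complex.conj_ofReal, map_ofNat]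
    ring
  rw [harg] at h
  exact Complex.conj_eq_iff_im.mp h

lemma tA_imag_eq (q t : ℝ) (n : ℤ) :
    tA q (2 * Complex.I * t) n = ((q ^ ((n : ℝ) ^ 2) * Real.exp (-(2 * n * t)) : ℝ) : ℂ) := by
  rw [tA, show Complex.I * (n : ℂ) * (2 * Complex.I * (t : ℂ)) = ((-(2 * (n : ℝ) * t) : ℝ) : ℂ) by
    push_cast
    ring_nf
    rw [Complex.I_sq]
    ring]
  rw [← Complex.ofReal_exp, ← Complex.ofReal_mul]

lemma posR_thA_imag {q : ℝ} (h0 : 0 < q) (h1 : q < 1) (t : ℝ) :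
    PosR (thA q (2 * Complex.I * t)) := by
  constructor
  · rw [thA, Complex.re_tsum (summable_tA h0 h1 _)]
    have hsummre : Summable (fun n : ℤ => (tA q (2 * Complex.I * (t : ℂ)) n).re) := by
      apply (summable_norm_tA h0 h1 (2 * Complex.I * t)).congr
      intro n
      rw [norm_tA h0, tA_imag_eq, Complex.ofReal_re]
      congr 2
      simp only [Complex.mul_im, Complex.mul_re, Complex.I_re, Complex.I_im,
        Complex.ofReal_re, Complex.ofReal_im, Complex.re_ofNat, Complex.im_ofNat]
      ring
    apply Summable.tsum_pos hsummre _ (0 : ℤ)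
    · rw [tA_imag_eq, Complex.ofReal_re]
      norm_num
    · intro n
      rw [tA_imag_eq, Complex.ofReal_re]
      positivity
  · rw [thA, Complex.im_tsum (summable_tA h0 h1 _)]
    have : ∀ n : ℤ, (tA q (2 * Complex.I * (t : ℂ)) n).im = 0 := by
      intro n
      rw [tA_imag_eq, Complex.ofReal_im]
    simp only [this]
    exact tsum_zero


lemma natAbs_le_sq {n : ℤ} (hn : n ≠ 0) : ((n.natAbs : ℝ)) ≤ ((n : ℝ)) ^ 2 := by
  have h1 : ((n.natAbs : ℝ)) = |((n : ℝ))| := by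
    rw [Nat.cast_natAbs]
    push_cast
    ring
  have h2 : (1 : ℝ) ≤ |((n : ℝ))| := by
    have := Int.one_le_abs hn
    calc (1 : ℝ) ≤ ((|n| : ℤ) : ℝ) := by exact_mod_cast this
      _ = |((n : ℝ))| := by push_cast; ring
  rw [h1]
  nlinarith [_root_.sq_abs ((n : ℝ))]

lemma rpow_sq_le_natAbs {q : ℝ} (h0 : 0 < q) (h1 : q < 1) {n : ℤ} (hn : n ≠ 0) :
    q ^ ((n : ℝ) ^ 2) ≤ q ^ n.natAbs := by
  calc q ^ ((n : ℝ) ^ 2) ≤ q ^ ((n.natAbs : ℝ)) :=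
        Real.rpow_le_rpow_of_exponent_ge h0 h1.le (natAbs_le_sq hn)
    _ = q ^ n.natAbs := Real.rpow_natCast q n.natAbs

lemma tB_zero_val (q : ℝ) (w : ℂ) : tB q w 0 = 1 := by
  rw [tB, tA]
  norm_num

lemma posAB_aux : ∀ N : ℕ, ∀ q : ℝ, 0 < q → q < 1 → q ^ (2 ^ N) < 1/3 →
    ∀ u : ℝ, PosR (thA q (u : ℂ)) ∧ PosR (thB q (u : ℂ)) := by
  intro N
  induction N with
  | zero =>
    intro q h0 h1 h3 u
    rw [pow_zero, pow_one] at h3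
    have hbA : ∀ n : ℤ, n ≠ 0 → ‖tA q (u : ℂ) n‖ ≤ q ^ n.natAbs := by
      intro n hn
      rw [norm_tA h0, Complex.ofReal_im]
      simp only [mul_zero, neg_zero, Real.exp_zero, mul_one]
      exact rpow_sq_le_natAbs h0 h1 hn
    have hbB : ∀ n : ℤ, n ≠ 0 → ‖tB q (u : ℂ) n‖ ≤ q ^ n.natAbs := by
      intro n hn
      rw [norm_tB h0, Complex.ofReal_im]
      simp only [mul_zero, neg_zero, Real.exp_zero, mul_one]
      exact rpow_sq_le_natAbs h0 h1 hn
    constructor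
    · refine ⟨?_, im_thA_real q u⟩
      rw [thA]
      apply tail_re_pos h0.le h3 (summable_tA h0 h1 _) _ hbA
      rw [tA]
      norm_num
    · refine ⟨?_, im_thB_real q u⟩
      rw [thB]
      exact tail_re_pos h0.le h3 (summable_tB h0 h1 _) (tB_zero_val q _) hbB
  | succ N ih =>
    intro q h0 h1 h3 u
    have h0sq : (0 : ℝ) < q ^ 2 := by positivity
    have h1sq : q ^ 2 < 1 := by nlinarith
    have hq2 : (q ^ 2) ^ (2 ^ N) < 1/3 := by
      have he : (q ^ 2) ^ (2 ^ N) = q ^ (2 ^ (N + 1)) := by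
        rw [← pow_mul]
        congr 1
        rw [pow_succ]
        ring
      rw [he]
      exact h3
    have h0f : (0 : ℝ) < q ^ 4 := by positivity
    have h1f : q ^ 4 < 1 := by nlinarith
    have hq4 : (q ^ 4) ^ (2 ^ N) < 1/3 := by
      have hle : (q ^ 4) ^ (2 ^ N) ≤ (q ^ 2) ^ (2 ^ N) := by
        apply pow_le_pow_left₀ (by positivity)
        nlinarith
      linarith
    have S2 := ih (q ^ 2) h0sq h1sq hq2
    have S4 := ih (q ^ 4) h0f h1f hq4
    have hid := key_id h0 h1 (u : ℂ) (u : ℂ)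
    rw [show (u : ℂ) - (u : ℂ) = 0 by ring, thC_zero, mul_zero, add_zero,
      show (u : ℂ) + (u : ℂ) = ((2 * u : ℝ) : ℂ) by push_cast; ring] at hid
    have hB20 : PosR (thB (q ^ 2) 0) := by
      have h := (S2 0).2
      rwa [Complex.ofReal_zero] at h
    have hprod : PosR (thA q (u : ℂ) * thB q (u : ℂ)) := by
      rw [hid]
      exact PosR.mul (S2 (2 * u)).2 hB20
    have hsum : PosR (thA q (u : ℂ) + thB q (u : ℂ)) := by
      rw [id3 h0 h1 (u : ℂ),
        show 2 * (u : ℂ) = ((2 * u : ℝ) : ℂ) by push_cast; ring]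
      exact PosR.two_mul (S4 (2 * u)).1
    exact posR_of_mul_add hprod hsum (im_thA_real q u) (im_thB_real q u)

lemma posAB {q : ℝ} (h0 : 0 < q) (h1 : q < 1) (u : ℝ) :
    PosR (thA q (u : ℂ)) ∧ PosR (thB q (u : ℂ)) := by
  obtain ⟨N, hN⟩ := exists_pow_lt_of_lt_one (by norm_num : (0 : ℝ) < 1/3) h1
  have h2 : q ^ (2 ^ N) ≤ q ^ N :=
    pow_le_pow_of_le_one h0.le h1.le (Nat.lt_two_pow_self (n := N)).le
  exact posAB_aux N q h0 h1 (lt_of_le_of_lt h2 hN) u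

lemma posF_aux : ∀ N : ℕ, ∀ q t : ℝ, 0 < q → q < 1 →
    1 ≤ 2 ^ N * (-Real.log q / 2 - |t|) → PosR (thB q (2 * Complex.I * t)) := by
  intro N
  induction N with
  | zero =>
    intro q t h0 h1 hδ
    rw [pow_zero, one_mul] at hδ
    have hγpos : 0 < -Real.log q := by
      have := Real.log_neg h0 h1
      linarith
    set δ : ℝ := -Real.log q / 2 - |t| with hδdef
    set r : ℝ := Real.exp (-(2 * δ)) with hr
    have hrpos : 0 < r := Real.exp_pos _
    have hr3 : r < 1/3 := by
      have h2 : r ≤ Real.exp (-2) := by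
        rw [hr, Real.exp_le_exp]
        linarith
      have h3 : (3 : ℝ) < Real.exp 2 := by
        have := Real.add_one_lt_exp (by norm_num : (2 : ℝ) ≠ 0)
        linarith
      have h4 : Real.exp (-2) < 1/3 := by
        rw [Real.exp_neg]
        have hp := Real.exp_pos 2
        have h5 : (Real.exp 2)⁻¹ * Real.exp 2 = 1 := inv_mul_cancel₀ (ne_of_gt hp)
        nlinarith
      linarith
    refine ⟨?_, im_thB_imag q t⟩
    rw [thB]
    apply tail_re_pos hrpos.le hr3 (summable_tB h0 h1 _) (tB_zero_val q _)
    intro n hn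
    rw [norm_tB h0]
    have him : (2 * Complex.I * (t : ℂ)).im = 2 * t := by
      simp only [Complex.mul_im, Complex.mul_re, Complex.I_re, Complex.I_im,
        Complex.ofReal_re, Complex.ofReal_im, Complex.re_ofNat, Complex.im_ofNat]
      ring
    rw [him]
    set k : ℕ := n.natAbs with hk
    have hk1 : (1 : ℝ) ≤ (k : ℝ) := by
      have : 1 ≤ k := by omega
      exact_mod_cast this
    have habs : |((n : ℝ))| = (k : ℝ) := by
      rw [hk, Nat.cast_natAbs]
      push_cast
      ring
    have hsq : ((n : ℝ)) ^ 2 = ((k : ℝ)) ^ 2 := by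
      nlinarith [_root_.sq_abs ((n : ℝ)), habs]
    have hnt : -((n : ℝ) * (2 * t)) ≤ 2 * (k : ℝ) * |t| := by
      calc -((n : ℝ) * (2 * t)) ≤ |(n : ℝ) * (2 * t)| := neg_le_abs _
        _ = 2 * (k : ℝ) * |t| := by
          rw [abs_mul, abs_mul, habs, _root_.abs_two]
          ring
    have hrk : r ^ k = Real.exp ((k : ℝ) * (-(2 * δ))) := by
      rw [hr, ← Real.exp_nat_mul]
    rw [Real.rpow_def_of_pos h0, ← Real.exp_add, hrk, Real.exp_le_exp]
    have hlogsq : Real.log q * (n : ℝ) ^ 2 ≤ Real.log q * (k : ℝ) := by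
      rw [hsq]
      have hklek2 : (k : ℝ) ≤ (k : ℝ) ^ 2 := by nlinarith
      nlinarith [hγpos]
    have : (k : ℝ) * (-(2 * δ)) = -(-Real.log q) * k + 2 * k * |t| := by
      rw [hδdef]; ring
    rw [this]
    have : Real.log q * (k : ℝ) = -(-Real.log q) * k := by ring
    linarith [hlogsq, hnt, this ▸ hlogsq]
  | succ N ih =>
    intro q t h0 h1 hδ
    have h0sq : (0 : ℝ) < q ^ 2 := by positivity
    have h1sq : q ^ 2 < 1 := by nlinarith
    have hlog2 : Real.log (q ^ 2) = 2 * Real.log q := by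
      rw [Real.log_pow]
      push_cast
      ring
    have hδ' : 1 ≤ 2 ^ N * (-Real.log (q ^ 2) / 2 - |2 * t|) := by
      rw [hlog2, abs_mul, _root_.abs_two]
      have he : -(2 * Real.log q) / 2 - 2 * |t| = 2 * (-Real.log q / 2 - |t|) := by ring
      rw [he, ← mul_assoc]
      rw [pow_succ] at hδ
      linarith [hδ]
    have hB2 := ih (q ^ 2) (2 * t) h0sq h1sq hδ'
    have hB20 : PosR (thB (q ^ 2) 0) := by
      have h := (posAB h0sq h1sq 0).2
      rwa [Complex.ofReal_zero] at h
    have hid := key_id h0 h1 (2 * Complex.I * (t : ℂ)) (2 * Complex.I * (t : ℂ))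
    rw [show 2 * Complex.I * (t : ℂ) - 2 * Complex.I * (t : ℂ) = 0 by ring, thC_zero,
      mul_zero, add_zero,
      show 2 * Complex.I * (t : ℂ) + 2 * Complex.I * (t : ℂ)
        = 2 * Complex.I * ((2 * t : ℝ) : ℂ) by push_cast; ring] at hid
    have hApos := posR_thA_imag h0 h1 t
    have hprod : PosR (thA q (2 * Complex.I * t) * thB q (2 * Complex.I * t)) := by
      rw [hid]
      exact PosR.mul hB2 hB20
    exact PosR.cancel hApos hprod (im_thB_imag q t)

lemma posF {q : ℝ} (h0 : 0 < q) (h1 : q < 1) {t : ℝ} (ht : |t| < -Real.log q / 2) :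
    PosR (thB q (2 * Complex.I * t)) := by
  set δ : ℝ := -Real.log q / 2 - |t| with hd
  have hδ : 0 < δ := by rw [hd]; linarith
  obtain ⟨n, hn⟩ := exists_nat_ge (1 / δ)
  have h2n : (1 : ℝ) / δ ≤ 2 ^ n := by
    calc (1 : ℝ) / δ ≤ (n : ℝ) := hn
      _ ≤ 2 ^ n := by exact_mod_cast (Nat.lt_two_pow_self (n := n)).le
  apply posF_aux n q t h0 h1
  rw [← hd]
  calc (1 : ℝ) = (1 / δ) * δ := by field_simp
    _ ≤ 2 ^ n * δ := by
      apply mul_le_mul_of_nonneg_right h2n hδ.le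


lemma main_ineq {q : ℝ} (hq0 : 0 < q) (hq1 : q < 1) (z : ℂ)
    (hz : |z.im| < -Real.log q / 2) :
    ‖∑' n : ℤ, (-1 : ℂ) ^ n * ((q ^ (2 * ((n : ℝ) + 1 / 2) ^ 2) : ℝ) : ℂ) *
        Complex.exp (Complex.I * (2 * (n : ℂ) + 1) * z)‖ <
    ‖∑' n : ℤ, (-1 : ℂ) ^ n * ((q ^ (2 * (n : ℝ) ^ 2) : ℝ) : ℂ) *
        Complex.exp (2 * Complex.I * (n : ℂ) * z)‖ := by
  have h0sq : (0 : ℝ) < q ^ 2 := by positivity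
  have h1sq : q ^ 2 < 1 := by nlinarith
  -- identify the two series
  have hX1 : (∑' n : ℤ, (-1 : ℂ) ^ n * ((q ^ (2 * ((n : ℝ) + 1 / 2) ^ 2) : ℝ) : ℂ) *
      Complex.exp (Complex.I * (2 * (n : ℂ) + 1) * z)) = thC (q ^ 2) (2 * z) := by
    rw [thC]
    apply tsum_congr
    intro n
    rw [tC, sq_rpow hq0 (((n : ℝ) + 1 / 2) ^ 2)]
    congr 2
    ring
  have hX4 : (∑' n : ℤ, (-1 : ℂ) ^ n * ((q ^ (2 * (n : ℝ) ^ 2) : ℝ) : ℂ) *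
      Complex.exp (2 * Complex.I * (n : ℂ) * z)) = thB (q ^ 2) (2 * z) := by
    rw [thB]
    apply tsum_congr
    intro n
    rw [tB, tA, sq_rpow hq0 ((n : ℝ) ^ 2), ← mul_assoc]
    congr 2
    ring
  -- conjugation relations
  have hc4 : (starRingEnd ℂ) (thB (q ^ 2) (2 * z)) = thB (q ^ 2) (2 * (starRingEnd ℂ) z) := by
    rw [star_thB, show -((starRingEnd ℂ) (2 * z)) = -(2 * (starRingEnd ℂ) z) by
      simp [map_mul, map_ofNat], thB_neg]
  have hc1 : (starRingEnd ℂ) (thC (q ^ 2) (2 * z)) = -thC (q ^ 2) (2 * (starRingEnd ℂ) z) := by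
    rw [star_thC, show -((starRingEnd ℂ) (2 * z)) = -(2 * (starRingEnd ℂ) z) by
      simp [map_mul, map_ofNat], thC_neg]
  -- the key identity at u = 2 Re z, v = 2 i Im z
  have hid := key_id hq0 hq1 ((2 * z.re : ℝ) : ℂ) (2 * Complex.I * (z.im : ℝ))
  have huv1 : ((2 * z.re : ℝ) : ℂ) + 2 * Complex.I * ((z.im : ℝ) : ℂ) = 2 * z := by
    conv_rhs => rw [← Complex.re_add_im z]
    push_cast
    ring
  have huv2 : ((2 * z.re : ℝ) : ℂ) - 2 * Complex.I * ((z.im : ℝ) : ℂ)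
      = 2 * (starRingEnd ℂ) z := by
    apply Complex.ext
    · simp [Complex.sub_re, Complex.mul_re]
    · simp [Complex.sub_im, Complex.mul_im]
  rw [huv1, huv2] at hid
  -- positivity of the left-hand side
  have hA := (posAB hq0 hq1 (2 * z.re)).1
  have hB := posF hq0 hq1 (t := z.im) hz
  have hL : PosR (thA q ((2 * z.re : ℝ) : ℂ) * thB q (2 * Complex.I * (z.im : ℝ))) :=
    PosR.mul hA hB
  -- rewrite the right-hand side via norms
  have hmc4 : thB (q ^ 2) (2 * z) * thB (q ^ 2) (2 * (starRingEnd ℂ) z)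
      = ((Complex.normSq (thB (q ^ 2) (2 * z)) : ℝ) : ℂ) := by
    rw [← hc4, Complex.mul_conj]
  have hmc1 : thC (q ^ 2) (2 * z) * thC (q ^ 2) (2 * (starRingEnd ℂ) z)
      = -((Complex.normSq (thC (q ^ 2) (2 * z)) : ℝ) : ℂ) := by
    have h : thC (q ^ 2) (2 * (starRingEnd ℂ) z)
        = -((starRingEnd ℂ) (thC (q ^ 2) (2 * z))) := by
      rw [hc1]; ring
    rw [h, ← Complex.mul_conj]
    ring
  rw [hmc4, hmc1] at hid
  have hre : 0 < Complex.normSq (thB (q ^ 2) (2 * z)) -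
      Complex.normSq (thC (q ^ 2) (2 * z)) := by
    have h := hL.1
    rw [hid] at h
    simpa using h
  rw [hX1, hX4]
  have h4 : ‖thC (q ^ 2) (2 * z)‖ ^ 2 < ‖thB (q ^ 2) (2 * z)‖ ^ 2 := by
    simp only [Complex.sq_norm]
    linarith
  exact lt_of_pow_lt_pow_left₀ 2 (norm_nonneg _) h4

end ThetaAux

open ThetaAux in
/-- Eigenvalue ratios of the quantum transfer matrix lie strictly inside the unit disc:
for `0 < q < 1`, `γ = −log q` and `|Im z| < γ/2` one has `|θ₁(z, q²)| < |θ₄(z, q²)|`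
(written via the theta series, the factor `−i` in `θ₁` being irrelevant for the modulus);
in particular each factor `θ₁(y − iγ/2, q²)/θ₄(y − iγ/2, q²)` with `0 < Im y < γ` has
modulus strictly less than `1`. -/
theorem theta1_lt_theta4 (q γ : ℝ) (hq0 : 0 < q) (hq1 : q < 1) (hγ : γ = -Real.log q) :
    (∀ z : ℂ, |z.im| < γ / 2 →
      ‖∑' n : ℤ, (-1 : ℂ) ^ n * ((q ^ (2 * ((n : ℝ) + 1 / 2) ^ 2) : ℝ) : ℂ) *
          Complex.exp (Complex.I * (2 * (n : ℂ) + 1) * z)‖ <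
      ‖∑' n : ℤ, (-1 : ℂ) ^ n * ((q ^ (2 * (n : ℝ) ^ 2) : ℝ) : ℂ) *
          Complex.exp (2 * Complex.I * (n : ℂ) * z)‖) ∧
    (∀ y : ℂ, 0 < y.im → y.im < γ →
      ‖(∑' n : ℤ, (-1 : ℂ) ^ n * ((q ^ (2 * ((n : ℝ) + 1 / 2) ^ 2) : ℝ) : ℂ) *
          Complex.exp (Complex.I * (2 * (n : ℂ) + 1) * (y - Complex.I * (γ : ℂ) / 2))) /
        (∑' n : ℤ, (-1 : ℂ) ^ n * ((q ^ (2 * (n : ℝ) ^ 2) : ℝ) : ℂ) *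
          Complex.exp (2 * Complex.I * (n : ℂ) * (y - Complex.I * (γ : ℂ) / 2)))‖ < 1) := by
  have hmain : ∀ z : ℂ, |z.im| < γ / 2 →
      ‖∑' n : ℤ, (-1 : ℂ) ^ n * ((q ^ (2 * ((n : ℝ) + 1 / 2) ^ 2) : ℝ) : ℂ) *
          Complex.exp (Complex.I * (2 * (n : ℂ) + 1) * z)‖ <
      ‖∑' n : ℤ, (-1 : ℂ) ^ n * ((q ^ (2 * (n : ℝ) ^ 2) : ℝ) : ℂ) *
          Complex.exp (2 * Complex.I * (n : ℂ) * z)‖ := by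
    intro z hz
    apply main_ineq hq0 hq1 z
    rw [hγ] at hz
    exact hz
  refine ⟨hmain, ?_⟩
  intro y hy1 hy2
  have him : (y - Complex.I * (γ : ℂ) / 2).im = y.im - γ / 2 := by
    simp [Complex.sub_im, Complex.div_im, Complex.mul_im]
  have hz : |(y - Complex.I * (γ : ℂ) / 2).im| < γ / 2 := by
    rw [him, abs_lt]
    constructor <;> linarith
  have h := hmain _ hz
  rw [norm_div]
  have hden : 0 < ‖∑' n : ℤ, (-1 : ℂ) ^ n * ((q ^ (2 * (n : ℝ) ^ 2) : ℝ) : ℂ) *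
      Complex.exp (2 * Complex.I * (n : ℂ) * (y - Complex.I * (γ : ℂ) / 2))‖ :=
    lt_of_le_of_lt (norm_nonneg _) h
  rw [div_lt_one hden]
  exact h
end
end
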